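/- Second moment ratio condition at ℓ = 0: Let ρ > 0 and assume 1 + ρ ln Γ(0) < 0. For any ρ-admissible scaling L : ℕ → ℕ, in the homogeneous binary MAG model M(n;L_n), writing ξ^{(0)}(u) for the indicator that node u is isolated and S_{L_n}(u) = 0, one has limsup_{n→∞} E[ξ^{(0)}(1) ξ^{(0)}(2)] / (E[ξ^{(0)}(1)])² ≤ 1. -/

import Mathlib

open MeasureTheory Filter

/-- Bernoulli measure on `Bool` with parameter `p` = probability of `true`. -/
noncomputable def bern (p : ℝ) : Measure Bool :=
  (Real.toNNReal p) • Measure.dirac true + (Real.toNNReal (1 - p)) • Measure.dirac false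

/-- Uniform distribution on `[0,1]`. -/
noncomputable def unif01 : Measure ℝ := MeasureTheory.volume.restrict (Set.Icc (0:ℝ) 1)

/-- The probability space of the homogeneous binary MAG model `M(n;L)`:
i.i.d. Bernoulli attribute bits and, independently, i.i.d. Uniform(0,1) variables. -/
noncomputable def magMeasure (n L : ℕ) (p : ℝ) :
    Measure ((Fin n → Fin L → Bool) × (Fin n × Fin n → ℝ)) :=
  (Measure.pi fun _ : Fin n => Measure.pi fun _ : Fin L => bern p).prod
    (Measure.pi fun _ : Fin n × Fin n => unif01)

/-- `Q_L(a,b) = ∏_{ℓ} q(a_ℓ, b_ℓ)`. -/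
def QL {L : ℕ} (q : Bool → Bool → ℝ) (a b : Fin L → Bool) : ℝ :=
  ∏ ℓ : Fin L, q (a ℓ) (b ℓ)

/-- Distinct nodes `u, v` are adjacent iff `U(u,v) ≤ Q_L(A(u),A(v))`, where the uniform
variable attached to the unordered pair `{u,v}` is the one indexed by `(min u v, max u v)`. -/
def Adj {n L : ℕ} (q : Bool → Bool → ℝ)
    (ω : (Fin n → Fin L → Bool) × (Fin n × Fin n → ℝ)) (u v : Fin n) : Prop :=
  u ≠ v ∧ ω.2 (min u v, max u v) ≤ QL q (ω.1 u) (ω.1 v)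

/-- Node `u` is isolated if it is adjacent to no other node. -/
def Isolated {n L : ℕ} (q : Bool → Bool → ℝ)
    (ω : (Fin n → Fin L → Bool) × (Fin n × Fin n → ℝ)) (u : Fin n) : Prop :=
  ∀ v, ¬ Adj q ω u v

/-- `S_L(u)`: the number of attributes exhibited by node `u`. -/
def Scount {n L : ℕ} (ω : (Fin n → Fin L → Bool) × (Fin n × Fin n → ℝ)) (u : Fin n) : ℕ :=
  (Finset.univ.filter fun ℓ : Fin L => ω.1 u ℓ = true).card

open scoped Classical in
/-- `I_n(L)`: the number of isolated nodes. -/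
noncomputable def numIsolated {n L : ℕ} (q : Bool → Bool → ℝ)
    (ω : (Fin n → Fin L → Bool) × (Fin n × Fin n → ℝ)) : ℕ :=
  (Finset.univ.filter fun u : Fin n => Isolated q ω u).card

open scoped Classical in
/-- `I_n^{(k)}(L)`: the number of isolated nodes `u` with `S_L(u) = k`. -/
noncomputable def numIsolatedWith {n L : ℕ} (q : Bool → Bool → ℝ) (k : ℕ)
    (ω : (Fin n → Fin L → Bool) × (Fin n × Fin n → ℝ)) : ℕ :=
  (Finset.univ.filter fun u : Fin n => Isolated q ω u ∧ Scount ω u = k).card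

open scoped Classical in
/-- `ξ^{(k)}(u)`: the indicator that node `u` is isolated and `S_L(u) = k`. -/
noncomputable def xiInd {n L : ℕ} (q : Bool → Bool → ℝ) (k : ℕ)
    (ω : (Fin n → Fin L → Bool) × (Fin n × Fin n → ℝ)) (u : Fin n) : ℝ :=
  if Isolated q ω u ∧ Scount ω u = k then 1 else 0

/-- `Γ(a) = μ(0) q(a,0) + μ(1) q(a,1)`, with `μ(1) = μ1`, `μ(0) = 1 - μ1`. -/
def Gam (μ1 : ℝ) (q : Bool → Bool → ℝ) (a : Bool) : ℝ :=
  (1 - μ1) * q a false + μ1 * q a true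

/-- A scaling `L : ℕ → ℕ` is `ρ`-admissible if `L_n ~ ρ ln n` as `n → ∞`. -/
def Admissible (ρ : ℝ) (L : ℕ → ℕ) : Prop :=
  Asymptotics.IsEquivalent Filter.atTop (fun n => (L n : ℝ)) (fun n => ρ * Real.log n)

/-- `G(ν,μ) = (μ/ν)^ν ((1-μ)/(1-ν))^{1-ν}` (real powers; the conventions at `ν = 0,1`
agree with the continuous extension). -/
noncomputable def Gfun (ν μ : ℝ) : ℝ :=
  (μ / ν) ^ ν * ((1 - μ) / (1 - ν)) ^ (1 - ν)

/-- `Q*_L(a) = E[Q_L(a,A)]`, `A` a vector of `L` i.i.d. Bernoulli(μ1) bits. -/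
noncomputable def Qstar {L : ℕ} (μ1 : ℝ) (q : Bool → Bool → ℝ) (a : Fin L → Bool) : ℝ :=
  ∫ b, QL q a b ∂(Measure.pi fun _ : Fin L => bern μ1)

/-- `Q**_L(a,b) = E[Q_L(a,A) Q_L(b,A)]`. -/
noncomputable def Qstarstar {L : ℕ} (μ1 : ℝ) (q : Bool → Bool → ℝ) (a b : Fin L → Bool) : ℝ :=
  ∫ c, QL q a c * QL q b c ∂(Measure.pi fun _ : Fin L => bern μ1)

/-- `Q̃_L(a,b) = Q*_L(a) + Q*_L(b) − Q**_L(a,b)`. -/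
noncomputable def Qtilde {L : ℕ} (μ1 : ℝ) (q : Bool → Bool → ℝ) (a b : Fin L → Bool) : ℝ :=
  Qstar μ1 q a + Qstar μ1 q b - Qstarstar μ1 q a b

lemma bern_isProb {p : ℝ} (h0 : 0 ≤ p) (h1 : p ≤ 1) : IsProbabilityMeasure (bern p) := by
  constructor
  simp only [bern, Measure.add_apply, Measure.smul_apply, Measure.dirac_apply_of_mem (Set.mem_univ _),
    smul_eq_mul, mul_one]
  rw [ENNReal.smul_def, ENNReal.smul_def, smul_eq_mul, smul_eq_mul, mul_one, mul_one]
  show ENNReal.ofReal p + ENNReal.ofReal (1-p) = 1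
  rw [← ENNReal.ofReal_add h0 (by linarith)]
  norm_num

instance : IsProbabilityMeasure unif01 := by
  constructor
  simp [unif01, Real.volume_Icc]

lemma bern_true {p : ℝ} : bern p {true} = ENNReal.ofReal p := by
  simp only [bern, Measure.add_apply, Measure.smul_apply, Measure.dirac_apply,
    Set.indicator_of_mem (by simp : true ∈ ({true} : Set Bool)),
    Set.indicator_of_notMem (by simp : false ∉ ({true} : Set Bool))]
  rw [ENNReal.smul_def, ENNReal.smul_def, smul_eq_mul, smul_eq_mul, Pi.one_apply, mul_one, mul_zero, add_zero]
  rfl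

lemma bern_false {p : ℝ} : bern p {false} = ENNReal.ofReal (1 - p) := by
  simp only [bern, Measure.add_apply, Measure.smul_apply, Measure.dirac_apply,
    Set.indicator_of_mem (by simp : false ∈ ({false} : Set Bool)),
    Set.indicator_of_notMem (by simp : true ∉ ({false} : Set Bool))]
  rw [ENNReal.smul_def, ENNReal.smul_def, smul_eq_mul, smul_eq_mul, Pi.one_apply, mul_one, mul_zero, zero_add]
  rfl

lemma integral_bern {p : ℝ} (h0 : 0 ≤ p) (h1 : p ≤ 1) (g : Bool → ℝ) :
    ∫ b, g b ∂(bern p) = (1 - p) * g false + p * g true := by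
  haveI := bern_isProb h0 h1
  rw [MeasureTheory.integral_fintype (Integrable.of_finite)]
  simp [measureReal_def, Fintype.sum_bool, bern_true, bern_false, ENNReal.toReal_ofReal h0,
    ENNReal.toReal_ofReal (by linarith : (0:ℝ) ≤ 1 - p), smul_eq_mul]
  ring

lemma unif01_int_gt {c : ℝ} (h0 : 0 ≤ c) (h1 : c ≤ 1) :
    ∫ x, (if c < x then (1:ℝ) else 0) ∂unif01 = 1 - c := by
  have h : (fun x => if c < x then (1:ℝ) else 0) = Set.indicator (Set.Ioi c) 1 := by
    funext x; simp [Set.indicator, Set.mem_Ioi]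
  rw [h, MeasureTheory.integral_indicator_one measurableSet_Ioi]
  rw [unif01, measureReal_def, Measure.restrict_apply measurableSet_Ioi]
  have : Set.Ioi c ∩ Set.Icc 0 1 = Set.Ioc c 1 := by
    ext x
    simp only [Set.mem_inter_iff, Set.mem_Ioi, Set.mem_Icc, Set.mem_Ioc]
    exact ⟨fun ⟨h, _, h2⟩ => ⟨h, h2⟩, fun ⟨h, h2⟩ => ⟨h, le_trans h0 h.le, h2⟩⟩
  rw [this, Real.volume_Ioc, ENNReal.toReal_ofReal (by linarith)]

lemma integral_pi_prod {ι E : Type*} [Fintype ι] [MeasurableSpace E] (μ : Measure E)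
    [SigmaFinite μ] (f : ι → E → ℝ) :
    ∫ x : ι → E, ∏ i, f i (x i) ∂(Measure.pi fun _ => μ) = ∏ i, ∫ x, f i x ∂μ := by
  letI : MeasureSpace E := ⟨μ⟩
  exact MeasureTheory.integral_fintype_prod_eq_prod (μ := fun _ => μ) f

lemma prod_ite_one {ι : Type*} [Fintype ι] (P : ι → Prop) [DecidablePred P] :
    (if (∀ i, P i) then (1:ℝ) else 0) = ∏ i, (if P i then (1:ℝ) else 0) := by
  by_cases h : ∀ i, P i
  · simp [h]
  · push_neg at h
    obtain ⟨i, hi⟩ := h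
    rw [if_neg (by tauto), eq_comm]
    exact Finset.prod_eq_zero (Finset.mem_univ i) (by simp [hi])


section QLlem
variable {L : ℕ} {q : Bool → Bool → ℝ}

lemma QL_nonneg (hq : ∀ a b, 0 < q a b ∧ q a b < 1) (a b : Fin L → Bool) : 0 ≤ QL q a b :=
  Finset.prod_nonneg fun ℓ _ => (hq _ _).1.le

lemma QL_le_one (hq : ∀ a b, 0 < q a b ∧ q a b < 1) (a b : Fin L → Bool) : QL q a b ≤ 1 :=
  Finset.prod_le_one (fun ℓ _ => (hq _ _).1.le) (fun ℓ _ => (hq _ _).2.le)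

lemma measurable_QL {n : ℕ} (u v : Fin n) :
    Measurable (fun ω : (Fin n → Fin L → Bool) × (Fin n × Fin n → ℝ) =>
      QL q (ω.1 u) (ω.1 v)) := by
  unfold QL
  apply Finset.measurable_prod
  intro ℓ _
  have h1 : Measurable fun ω : (Fin n → Fin L → Bool) × (Fin n × Fin n → ℝ) =>
      (ω.1 u ℓ, ω.1 v ℓ) :=
    ((measurable_pi_apply ℓ).comp ((measurable_pi_apply u).comp measurable_fst)).prodMk
      ((measurable_pi_apply ℓ).comp ((measurable_pi_apply v).comp measurable_fst))
  exact (measurable_of_countable (fun bc : Bool × Bool => q bc.1 bc.2)).comp h1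

end QLlem

lemma integrable_of_meas_bound {α : Type*} [MeasurableSpace α] {μ : Measure α}
    [IsFiniteMeasure μ] {f : α → ℝ} (hm : Measurable f) (h0 : ∀ x, 0 ≤ f x)
    (h1 : ∀ x, f x ≤ 1) : Integrable f μ :=
  Integrable.mono' (integrable_const 1) hm.aestronglyMeasurable
    (ae_of_all _ fun x => by rw [Real.norm_eq_abs, abs_of_nonneg (h0 x)]; exact h1 x)

open scoped Classical


lemma xi_zero_eq {n L : ℕ} (q : Bool → Bool → ℝ)
    (ω : (Fin (n+2) → Fin L → Bool) × (Fin (n+2) × Fin (n+2) → ℝ)) :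
    xiInd q 0 ω (0 : Fin (n+2)) =
      (∏ ℓ : Fin L, (if ω.1 0 ℓ = false then (1:ℝ) else 0)) *
      ∏ i : Fin (n+2) × Fin (n+2),
        (if (i.1 = 0 ∧ i.2 ≠ 0 → QL q (ω.1 0) (ω.1 i.2) < ω.2 i) then (1:ℝ) else 0) := by
  rw [← prod_ite_one, ← prod_ite_one]
  have hiff : (Isolated q ω 0 ∧ Scount ω 0 = 0) ↔
      ((∀ ℓ, ω.1 0 ℓ = false) ∧
        ∀ i : Fin (n+2) × Fin (n+2),
          (i.1 = 0 ∧ i.2 ≠ 0 → QL q (ω.1 0) (ω.1 i.2) < ω.2 i)) := by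
    constructor
    · rintro ⟨hiso, hS⟩
      constructor
      · intro ℓ
        have := Finset.card_eq_zero.1 hS
        by_contra hℓ
        have : ℓ ∈ Finset.univ.filter fun ℓ : Fin L => ω.1 0 ℓ = true := by
          simp [Bool.not_eq_false] at hℓ
          simp [hℓ]
        simp [Finset.card_eq_zero.1 hS] at this
      · rintro i ⟨h1, h2⟩
        have := hiso i.2
        rw [Adj] at this
        push_neg at this
        have h02 : (0 : Fin (n+2)) ≠ i.2 := fun h => h2 h.symm
        have := this h02
        rw [min_eq_left (Fin.zero_le _), max_eq_right (Fin.zero_le _)] at this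
        have hi : i = (0, i.2) := by rw [← h1]
        rw [hi]
        exact this
    · rintro ⟨hA, hU⟩
      constructor
      · intro v
        rintro ⟨huv, hle⟩
        have hv0 : v ≠ 0 := fun h => huv h.symm
        have := hU (0, v) ⟨rfl, hv0⟩
        rw [min_eq_left (Fin.zero_le _), max_eq_right (Fin.zero_le _)] at hle
        exact absurd hle (not_le.2 this)
      · rw [Scount, Finset.card_eq_zero, Finset.filter_eq_empty_iff]
        intro ℓ _
        simp [hA ℓ]
  rw [xiInd, if_congr hiff rfl rfl]
  by_cases h : (∀ ℓ, ω.1 0 ℓ = false) ∧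
      ∀ i : Fin (n+2) × Fin (n+2), (i.1 = 0 ∧ i.2 ≠ 0 → QL q (ω.1 0) (ω.1 i.2) < ω.2 i)
  · rw [if_pos h, if_pos h.1, if_pos h.2, mul_one]
  · rw [if_neg h]
    rcases not_and_or.1 h with h' | h'
    · rw [if_neg h', zero_mul]
    · rw [if_neg h', mul_zero]

lemma integral_xi_zero (μ1 : ℝ) (h0 : 0 < μ1) (h1 : μ1 < 1)
    (q : Bool → Bool → ℝ) (hq : ∀ a b, 0 < q a b ∧ q a b < 1) (n L : ℕ) :
    ∫ ω, xiInd q 0 ω (0 : Fin (n+2)) ∂(magMeasure (n+2) L μ1)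
      = (1-μ1)^L * (1 - (Gam μ1 q false)^L)^(n+1) := by
  haveI hPB : IsProbabilityMeasure (bern μ1) := bern_isProb h0.le h1.le
  set μA : Measure (Fin (n+2) → Fin L → Bool) :=
    Measure.pi fun _ : Fin (n+2) => Measure.pi fun _ : Fin L => bern μ1 with hμA
  set μU : Measure (Fin (n+2) × Fin (n+2) → ℝ) :=
    Measure.pi fun _ : Fin (n+2) × Fin (n+2) => unif01 with hμU
  -- the integrand in product form
  set F1 : (Fin (n+2) → Fin L → Bool) → ℝ :=
    fun a => ∏ ℓ : Fin L, (if a 0 ℓ = false then (1:ℝ) else 0) with hF1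
  set F2 : (Fin (n+2) → Fin L → Bool) → (Fin (n+2) × Fin (n+2) → ℝ) → ℝ :=
    fun a x => ∏ i : Fin (n+2) × Fin (n+2),
      (if (i.1 = 0 ∧ i.2 ≠ 0 → QL q (a 0) (a i.2) < x i) then (1:ℝ) else 0) with hF2
  have hmF1 : Measurable fun ω : (Fin (n+2) → Fin L → Bool) × (Fin (n+2) × Fin (n+2) → ℝ) =>
      F1 ω.1 := by
    apply Finset.measurable_prod
    intro ℓ _
    have hm : Measurable fun ω : (Fin (n+2) → Fin L → Bool) × (Fin (n+2) × Fin (n+2) → ℝ) =>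
        ω.1 0 ℓ := (measurable_pi_apply ℓ).comp ((measurable_pi_apply 0).comp measurable_fst)
    exact Measurable.ite (hm (measurableSet_singleton false)) measurable_const measurable_const
  have hmF2 : Measurable fun ω : (Fin (n+2) → Fin L → Bool) × (Fin (n+2) × Fin (n+2) → ℝ) =>
      F2 ω.1 ω.2 := by
    apply Finset.measurable_prod
    intro i _
    by_cases hc : i.1 = 0 ∧ i.2 ≠ 0
    · have heq : (fun ω : (Fin (n+2) → Fin L → Bool) × (Fin (n+2) × Fin (n+2) → ℝ) =>
          (if (i.1 = 0 ∧ i.2 ≠ 0 → QL q (ω.1 0) (ω.1 i.2) < ω.2 i) then (1:ℝ) else 0)) =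
          fun ω => (if QL q (ω.1 0) (ω.1 i.2) < ω.2 i then (1:ℝ) else 0) := by
        funext ω; simp [hc]
      rw [heq]
      exact Measurable.ite
        (measurableSet_lt (measurable_QL 0 i.2) ((measurable_pi_apply i).comp measurable_snd))
        measurable_const measurable_const
    · have heq : (fun ω : (Fin (n+2) → Fin L → Bool) × (Fin (n+2) × Fin (n+2) → ℝ) =>
          (if (i.1 = 0 ∧ i.2 ≠ 0 → QL q (ω.1 0) (ω.1 i.2) < ω.2 i) then (1:ℝ) else 0)) =
          fun _ => (1:ℝ) := by
        funext ω; simp [hc]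
      rw [heq]; exact measurable_const
  have hb01 : ∀ (P : Prop) [Decidable P], (0:ℝ) ≤ (if P then (1:ℝ) else 0) ∧
      (if P then (1:ℝ) else 0) ≤ 1 := by
    intro P _; by_cases h : P <;> simp [h]
  have hF1b : ∀ a, 0 ≤ F1 a ∧ F1 a ≤ 1 := by
    intro a
    constructor
    · exact Finset.prod_nonneg fun ℓ _ => (hb01 _).1
    · exact Finset.prod_le_one (fun ℓ _ => (hb01 _).1) (fun ℓ _ => (hb01 _).2)
  have hF2b : ∀ a x, 0 ≤ F2 a x ∧ F2 a x ≤ 1 := by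
    intro a x
    constructor
    · exact Finset.prod_nonneg fun i _ => (hb01 _).1
    · exact Finset.prod_le_one (fun i _ => (hb01 _).1) (fun i _ => (hb01 _).2)
  haveI : IsProbabilityMeasure μA := by rw [hμA]; infer_instance
  haveI : IsProbabilityMeasure μU := by rw [hμU]; infer_instance
  have hInt : Integrable (fun ω : (Fin (n+2) → Fin L → Bool) × (Fin (n+2) × Fin (n+2) → ℝ) =>
      F1 ω.1 * F2 ω.1 ω.2) (μA.prod μU) := by
    apply integrable_of_meas_bound (hmF1.mul hmF2)
    · intro ω; exact mul_nonneg (hF1b _).1 (hF2b _ _).1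
    · intro ω; exact mul_le_one₀ (hF1b _).2 (hF2b _ _).1 (hF2b _ _).2
  have hrw : ∫ ω, xiInd q 0 ω (0 : Fin (n+2)) ∂(magMeasure (n+2) L μ1)
      = ∫ ω, F1 ω.1 * F2 ω.1 ω.2 ∂(μA.prod μU) := by
    rw [magMeasure]
    congr 1
    funext ω
    exact xi_zero_eq q ω
  rw [hrw, MeasureTheory.integral_prod _ hInt]
  -- inner integral
  have hinner : ∀ a : Fin (n+2) → Fin L → Bool,
      ∫ x, F1 a * F2 a x ∂μU
        = F1 a * ∏ i : Fin (n+2) × Fin (n+2),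
            (if i.1 = 0 ∧ i.2 ≠ 0 then 1 - QL q (a 0) (a i.2) else 1) := by
    intro a
    rw [MeasureTheory.integral_const_mul]
    congr 1
    refine (integral_pi_prod unif01
      (fun (i : Fin (n+2) × Fin (n+2)) (t : ℝ) =>
        if (i.1 = 0 ∧ i.2 ≠ 0 → QL q (a 0) (a i.2) < t) then (1:ℝ) else 0)).trans ?_
    apply Finset.prod_congr rfl
    intro i _
    by_cases hc : i.1 = 0 ∧ i.2 ≠ 0
    · have hiff : ∀ t : ℝ, (i.1 = 0 ∧ i.2 ≠ 0 → QL q (a 0) (a i.2) < t) ↔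
          (QL q (a 0) (a i.2) < t) := fun t => by simp [hc]
      simp only [hiff, if_pos hc]
      exact unif01_int_gt (QL_nonneg hq _ _) (QL_le_one hq _ _)
    · have hiff : ∀ t : ℝ, (i.1 = 0 ∧ i.2 ≠ 0 → QL q (a 0) (a i.2) < t) ↔ True :=
        fun t => by simp [hc]
      simp only [hiff, if_true, if_neg hc]
      simp
  simp_rw [hinner]
  set μB : Measure (Fin L → Bool) := Measure.pi fun _ : Fin L => bern μ1 with hμB
  haveI : IsProbabilityMeasure μB := by rw [hμB]; infer_instance
  set G : Fin (n+2) → (Fin L → Bool) → ℝ := fun u b =>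
    if u = 0 then (∏ ℓ : Fin L, if b ℓ = false then (1:ℝ) else 0)
    else (1 - QL q (fun _ => false) b) with hG
  have key : ∀ a : Fin (n+2) → Fin L → Bool,
      F1 a * (∏ i : Fin (n+2) × Fin (n+2),
          (if i.1 = 0 ∧ i.2 ≠ 0 then 1 - QL q (a 0) (a i.2) else 1))
        = ∏ u : Fin (n+2), G u (a u) := by
    intro a
    by_cases h : ∀ ℓ, a 0 ℓ = false
    · have ha : a 0 = fun _ => false := funext h
      have hF1a : F1 a = 1 := by
        rw [hF1]; exact Finset.prod_eq_one fun ℓ _ => if_pos (h ℓ)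
      rw [hF1a, one_mul]
      have hrow : (∏ i : Fin (n+2) × Fin (n+2),
          (if i.1 = 0 ∧ i.2 ≠ 0 then 1 - QL q (a 0) (a i.2) else 1))
          = ∏ v : Fin (n+2), (if v = 0 then 1 else (1 - QL q (fun _ => false) (a v))) := by
        rw [Fintype.prod_prod_type]
        rw [Finset.prod_eq_single_of_mem (0 : Fin (n+2)) (Finset.mem_univ _)]
        · apply Finset.prod_congr rfl
          intro v _
          by_cases hv : v = 0
          · simp [hv]
          · simp [hv, ha]
        · intro u _ hu
          apply Finset.prod_eq_one
          intro v _
          rw [if_neg (by simp [hu])]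
      rw [hrow]
      apply Finset.prod_congr rfl
      intro u _
      by_cases hu : u = 0
      · rw [if_pos hu, hG]
        simp only [if_pos hu]
        rw [eq_comm, hu]
        exact Finset.prod_eq_one fun ℓ _ => if_pos (h ℓ)
      · rw [if_neg hu, hG]; simp only [if_neg hu]
    · obtain ⟨ℓ0, hℓ0⟩ := not_forall.1 h
      have hF1a : F1 a = 0 := by
        rw [hF1]
        exact Finset.prod_eq_zero (Finset.mem_univ ℓ0) (if_neg hℓ0)
      rw [hF1a, zero_mul, eq_comm]
      apply Finset.prod_eq_zero (Finset.mem_univ (0 : Fin (n+2)))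
      rw [hG]
      simp only [if_pos rfl]
      exact Finset.prod_eq_zero (Finset.mem_univ ℓ0) (if_neg hℓ0)
  simp_rw [key]
  refine (integral_pi_prod μB G).trans ?_
  have hGval : ∀ u : Fin (n+2), ∫ b, G u b ∂μB
      = (if u = 0 then (1-μ1)^L else (1 - (Gam μ1 q false)^L)) := by
    intro u
    by_cases hu : u = 0
    · rw [if_pos hu]
      have : G u = fun b => ∏ ℓ : Fin L, (if b ℓ = false then (1:ℝ) else 0) := by
        funext b; rw [hG]; simp only [if_pos hu]
      rw [this, hμB]
      refine (integral_pi_prod (bern μ1)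
        (fun (_ : Fin L) (t : Bool) => if t = false then (1:ℝ) else 0)).trans ?_
      have : ∀ ℓ : Fin L, ∫ t, (if t = false then (1:ℝ) else 0) ∂(bern μ1) = 1 - μ1 := by
        intro ℓ
        rw [integral_bern h0.le h1.le]
        norm_num
      rw [Finset.prod_congr rfl fun ℓ _ => this ℓ, Finset.prod_const, Finset.card_univ,
        Fintype.card_fin]
    · rw [if_neg hu]
      have : G u = fun b => 1 - QL q (fun _ => false) b := by
        funext b; rw [hG]; simp only [if_neg hu]
      rw [this]
      rw [MeasureTheory.integral_sub (integrable_const 1) Integrable.of_finite]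
      rw [MeasureTheory.integral_const]
      simp only [measureReal_def, measure_univ, ENNReal.toReal_one, smul_eq_mul, one_mul]
      congr 1
      rw [hμB]
      refine (integral_pi_prod (bern μ1) (fun (_ : Fin L) (t : Bool) => q false t)).trans ?_
      have : ∀ ℓ : Fin L, ∫ t, q false t ∂(bern μ1) = Gam μ1 q false := by
        intro ℓ
        rw [integral_bern h0.le h1.le, Gam]
      rw [Finset.prod_congr rfl fun ℓ _ => this ℓ, Finset.prod_const, Finset.card_univ,
        Fintype.card_fin]
  rw [Finset.prod_congr rfl fun u _ => hGval u]
  rw [← Finset.mul_prod_erase Finset.univ _ (Finset.mem_univ (0 : Fin (n+2)))]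
  rw [if_pos rfl]
  congr 1
  rw [Finset.prod_congr rfl fun u hu => if_neg (Finset.ne_of_mem_erase hu),
    Finset.prod_const, Finset.card_erase_of_mem (Finset.mem_univ _), Finset.card_univ,
    Fintype.card_fin]
  norm_num

lemma fin_one_le {n : ℕ} {v : Fin (n+2)} (hv : v ≠ 0) : (1 : Fin (n+2)) ≤ v := by
  rw [Fin.le_def, Fin.val_one]
  have : v.val ≠ 0 := fun h => hv (Fin.ext h)
  omega

lemma fin_zero_ne_one {n : ℕ} : (0 : Fin (n+2)) ≠ 1 := by simp [Fin.ext_iff]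

lemma xi_pair_eq {n L : ℕ} (q : Bool → Bool → ℝ)
    (ω : (Fin (n+2) → Fin L → Bool) × (Fin (n+2) × Fin (n+2) → ℝ)) :
    xiInd q 0 ω (0 : Fin (n+2)) * xiInd q 0 ω (1 : Fin (n+2)) =
      ((∏ ℓ : Fin L, if ω.1 0 ℓ = false then (1:ℝ) else 0) *
       (∏ ℓ : Fin L, if ω.1 1 ℓ = false then (1:ℝ) else 0)) *
      ∏ i : Fin (n+2) × Fin (n+2),
        (if ((i = (0,1) → QL q (ω.1 0) (ω.1 1) < ω.2 i ∧ QL q (ω.1 1) (ω.1 0) < ω.2 i) ∧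
             (i.1 = 0 ∧ i.2 ≠ 0 ∧ i.2 ≠ 1 → QL q (ω.1 0) (ω.1 i.2) < ω.2 i) ∧
             (i.1 = 1 ∧ i.2 ≠ 0 ∧ i.2 ≠ 1 → QL q (ω.1 1) (ω.1 i.2) < ω.2 i))
          then (1:ℝ) else 0) := by
  rw [← prod_ite_one, ← prod_ite_one, ← prod_ite_one]
  have hiff : ((Isolated q ω 0 ∧ Scount ω 0 = 0) ∧ (Isolated q ω 1 ∧ Scount ω 1 = 0)) ↔
      ((∀ ℓ, ω.1 0 ℓ = false) ∧ (∀ ℓ, ω.1 1 ℓ = false) ∧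
        ∀ i : Fin (n+2) × Fin (n+2),
          ((i = (0,1) → QL q (ω.1 0) (ω.1 1) < ω.2 i ∧ QL q (ω.1 1) (ω.1 0) < ω.2 i) ∧
           (i.1 = 0 ∧ i.2 ≠ 0 ∧ i.2 ≠ 1 → QL q (ω.1 0) (ω.1 i.2) < ω.2 i) ∧
           (i.1 = 1 ∧ i.2 ≠ 0 ∧ i.2 ≠ 1 → QL q (ω.1 1) (ω.1 i.2) < ω.2 i))) := by
    have hScount : ∀ u : Fin (n+2), Scount ω u = 0 ↔ (∀ ℓ, ω.1 u ℓ = false) := by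
      intro u
      rw [Scount, Finset.card_eq_zero, Finset.filter_eq_empty_iff]
      constructor
      · intro h ℓ
        have := h (Finset.mem_univ ℓ)
        simpa [Bool.not_eq_true] using this
      · intro h ℓ _
        simp [h ℓ]
    constructor
    · rintro ⟨⟨hiso0, hS0⟩, ⟨hiso1, hS1⟩⟩
      refine ⟨(hScount 0).1 hS0, (hScount 1).1 hS1, ?_⟩
      intro i
      refine ⟨?_, ?_, ?_⟩
      · intro hi
        have h01 := hiso0 1
        rw [Adj] at h01; push_neg at h01
        have h01' := h01 fin_zero_ne_one
        rw [min_eq_left (Fin.zero_le _), max_eq_right (Fin.zero_le _)] at h01'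
        have h10 := hiso1 0
        rw [Adj] at h10; push_neg at h10
        have h10' := h10 (Ne.symm fin_zero_ne_one)
        rw [min_eq_right (Fin.zero_le _), max_eq_left (Fin.zero_le _)] at h10'
        rw [hi]
        exact ⟨h01', h10'⟩
      · rintro ⟨h1, h2, _⟩
        have := hiso0 i.2
        rw [Adj] at this; push_neg at this
        have := this (fun h => h2 h.symm)
        rw [min_eq_left (Fin.zero_le _), max_eq_right (Fin.zero_le _)] at this
        have hi : i = (0, i.2) := by rw [← h1]
        rw [hi]; exact this
      · rintro ⟨h1, h2, h3⟩
        have := hiso1 i.2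
        rw [Adj] at this; push_neg at this
        have := this (fun h => h3 h.symm)
        rw [min_eq_left (fin_one_le h2), max_eq_right (fin_one_le h2)] at this
        have hi : i = (1, i.2) := by rw [← h1]
        rw [hi]; exact this
    · rintro ⟨hA0, hA1, hR⟩
      refine ⟨⟨?_, (hScount 0).2 hA0⟩, ?_, (hScount 1).2 hA1⟩
      · rintro v ⟨huv, hle⟩
        rw [min_eq_left (Fin.zero_le _), max_eq_right (Fin.zero_le _)] at hle
        by_cases hv1 : v = 1
        · subst hv1
          exact absurd hle (not_le.2 ((hR (0,1)).1 rfl).1)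
        · have := ((hR (0, v)).2.1 ⟨rfl, fun h => huv h.symm, hv1⟩)
          exact absurd hle (not_le.2 this)
      · rintro v ⟨huv, hle⟩
        by_cases hv0 : v = 0
        · subst hv0
          rw [min_eq_right (Fin.zero_le _), max_eq_left (Fin.zero_le _)] at hle
          exact absurd hle (not_le.2 ((hR (0,1)).1 rfl).2)
        · by_cases hv1 : v = 1
          · exact huv hv1.symm
          · rw [min_eq_left (fin_one_le hv0), max_eq_right (fin_one_le hv0)] at hle
            have := ((hR (1, v)).2.2 ⟨rfl, hv0, hv1⟩)
            exact absurd hle (not_le.2 this)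
  rw [xiInd, xiInd]
  by_cases hc : (Isolated q ω 0 ∧ Scount ω 0 = 0) ∧ (Isolated q ω 1 ∧ Scount ω 1 = 0)
  · obtain ⟨hA0, hA1, hR⟩ := hiff.1 hc
    rw [if_pos hc.1, if_pos hc.2, if_pos hA0, if_pos hA1, if_pos hR]
    norm_num
  · have hnc : ¬((∀ ℓ, ω.1 0 ℓ = false) ∧ (∀ ℓ, ω.1 1 ℓ = false) ∧
        ∀ i : Fin (n+2) × Fin (n+2),
          ((i = (0,1) → QL q (ω.1 0) (ω.1 1) < ω.2 i ∧ QL q (ω.1 1) (ω.1 0) < ω.2 i) ∧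
           (i.1 = 0 ∧ i.2 ≠ 0 ∧ i.2 ≠ 1 → QL q (ω.1 0) (ω.1 i.2) < ω.2 i) ∧
           (i.1 = 1 ∧ i.2 ≠ 0 ∧ i.2 ≠ 1 → QL q (ω.1 1) (ω.1 i.2) < ω.2 i))) :=
      fun h => hc (hiff.2 h)
    have hLHS : ((if Isolated q ω 0 ∧ Scount ω 0 = 0 then (1:ℝ) else 0) *
        (if Isolated q ω 1 ∧ Scount ω 1 = 0 then (1:ℝ) else 0)) = 0 := by
      rcases not_and_or.1 hc with h | h
      · rw [if_neg h, zero_mul]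
      · rw [if_neg h, mul_zero]
    rw [hLHS, eq_comm]
    rcases not_and_or.1 hnc with h | h
    · rw [if_neg h, zero_mul, zero_mul]
    · rcases not_and_or.1 h with h' | h'
      · rw [if_neg h', mul_zero, zero_mul]
      · rw [if_neg h', mul_zero]

lemma integral_indFalse (μ1 : ℝ) (h0 : 0 < μ1) (h1 : μ1 < 1) (L : ℕ) :
    ∫ b : Fin L → Bool, (∏ ℓ : Fin L, if b ℓ = false then (1:ℝ) else 0)
      ∂(Measure.pi fun _ : Fin L => bern μ1) = (1-μ1)^L := by
  haveI : IsProbabilityMeasure (bern μ1) := bern_isProb h0.le h1.le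
  refine (integral_pi_prod (bern μ1)
    (fun (_ : Fin L) (t : Bool) => if t = false then (1:ℝ) else 0)).trans ?_
  have h : ∀ ℓ : Fin L, ∫ t, (if t = false then (1:ℝ) else 0) ∂(bern μ1) = 1 - μ1 := by
    intro ℓ; rw [integral_bern h0.le h1.le]; norm_num
  rw [Finset.prod_congr rfl fun ℓ _ => h ℓ, Finset.prod_const, Finset.card_univ,
    Fintype.card_fin]

lemma integral_QL_pow (μ1 : ℝ) (h0 : 0 < μ1) (h1 : μ1 < 1) (q : Bool → Bool → ℝ)
    (L k : ℕ) :
    ∫ b : Fin L → Bool, (QL q (fun _ => false) b)^k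
      ∂(Measure.pi fun _ : Fin L => bern μ1)
      = ((1-μ1) * (q false false)^k + μ1 * (q false true)^k)^L := by
  haveI : IsProbabilityMeasure (bern μ1) := bern_isProb h0.le h1.le
  have hexp : ∀ b : Fin L → Bool, (QL q (fun _ => false) b)^k
      = ∏ ℓ : Fin L, (q false (b ℓ))^k := by
    intro b; rw [QL, ← Finset.prod_pow]
  simp_rw [hexp]
  refine (integral_pi_prod (bern μ1) (fun (_ : Fin L) (t : Bool) => (q false t)^k)).trans ?_
  have h : ∀ ℓ : Fin L, ∫ t, (q false t)^k ∂(bern μ1)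
      = (1-μ1) * (q false false)^k + μ1 * (q false true)^k := by
    intro ℓ; rw [integral_bern h0.le h1.le]
  rw [Finset.prod_congr rfl fun ℓ _ => h ℓ, Finset.prod_const, Finset.card_univ,
    Fintype.card_fin]

lemma integral_xi_pair (μ1 : ℝ) (h0 : 0 < μ1) (h1 : μ1 < 1)
    (q : Bool → Bool → ℝ) (hq : ∀ a b, 0 < q a b ∧ q a b < 1) (n L : ℕ) :
    ∫ ω, xiInd q 0 ω (0 : Fin (n+2)) * xiInd q 0 ω (1 : Fin (n+2)) ∂(magMeasure (n+2) L μ1)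
      = ((1-μ1)^L)^2 * (1 - (q false false)^L) *
        (1 - 2*(Gam μ1 q false)^L
          + ((1-μ1)*(q false false)^2 + μ1*(q false true)^2)^L)^n := by
  haveI hPB : IsProbabilityMeasure (bern μ1) := bern_isProb h0.le h1.le
  set μB : Measure (Fin L → Bool) := Measure.pi fun _ : Fin L => bern μ1 with hμB
  haveI : IsProbabilityMeasure μB := by rw [hμB]; infer_instance
  set μA : Measure (Fin (n+2) → Fin L → Bool) :=
    Measure.pi fun _ : Fin (n+2) => μB with hμA
  set μU : Measure (Fin (n+2) × Fin (n+2) → ℝ) :=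
    Measure.pi fun _ : Fin (n+2) × Fin (n+2) => unif01 with hμU
  haveI : IsProbabilityMeasure μA := by rw [hμA]; infer_instance
  haveI : IsProbabilityMeasure μU := by rw [hμU]; infer_instance
  set cff : Fin L → Bool := fun _ => false with hcff
  have hne10 : (1 : Fin (n+2)) ≠ 0 := Ne.symm fin_zero_ne_one
  -- components
  set F0 : (Fin (n+2) → Fin L → Bool) → ℝ :=
    fun a => ∏ ℓ : Fin L, (if a 0 ℓ = false then (1:ℝ) else 0) with hF0
  set F1 : (Fin (n+2) → Fin L → Bool) → ℝ :=
    fun a => ∏ ℓ : Fin L, (if a 1 ℓ = false then (1:ℝ) else 0) with hF1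
  set R : (Fin (n+2) → Fin L → Bool) → (Fin (n+2) × Fin (n+2) → ℝ) →
      Fin (n+2) × Fin (n+2) → Prop :=
    fun a x i =>
      ((i = (0,1) → QL q (a 0) (a 1) < x i ∧ QL q (a 1) (a 0) < x i) ∧
       (i.1 = 0 ∧ i.2 ≠ 0 ∧ i.2 ≠ 1 → QL q (a 0) (a i.2) < x i) ∧
       (i.1 = 1 ∧ i.2 ≠ 0 ∧ i.2 ≠ 1 → QL q (a 1) (a i.2) < x i)) with hR
  set F2 : (Fin (n+2) → Fin L → Bool) → (Fin (n+2) × Fin (n+2) → ℝ) → ℝ :=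
    fun a x => ∏ i : Fin (n+2) × Fin (n+2), (if R a x i then (1:ℝ) else 0) with hF2
  have hmInd : ∀ u : Fin (n+2), Measurable
      (fun ω : (Fin (n+2) → Fin L → Bool) × (Fin (n+2) × Fin (n+2) → ℝ) =>
        ∏ ℓ : Fin L, (if ω.1 u ℓ = false then (1:ℝ) else 0)) := by
    intro u
    apply Finset.measurable_prod
    intro ℓ _
    have hm : Measurable fun ω : (Fin (n+2) → Fin L → Bool) × (Fin (n+2) × Fin (n+2) → ℝ) =>
        ω.1 u ℓ := (measurable_pi_apply ℓ).comp ((measurable_pi_apply u).comp measurable_fst)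
    exact Measurable.ite (hm (measurableSet_singleton false)) measurable_const measurable_const
  have hmF2 : Measurable fun ω : (Fin (n+2) → Fin L → Bool) × (Fin (n+2) × Fin (n+2) → ℝ) =>
      F2 ω.1 ω.2 := by
    apply Finset.measurable_prod
    intro i _
    have hxm : Measurable fun ω : (Fin (n+2) → Fin L → Bool) × (Fin (n+2) × Fin (n+2) → ℝ) =>
        ω.2 i := (measurable_pi_apply i).comp measurable_snd
    by_cases hi : i = (0,1)
    · have heq : ∀ ω : (Fin (n+2) → Fin L → Bool) × (Fin (n+2) × Fin (n+2) → ℝ),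
          R ω.1 ω.2 i ↔ (QL q (ω.1 0) (ω.1 1) < ω.2 i ∧ QL q (ω.1 1) (ω.1 0) < ω.2 i) := by
        intro ω; rw [hR]; simp [hi, fin_zero_ne_one]
      simp_rw [heq]
      exact Measurable.ite
        ((measurableSet_lt (measurable_QL 0 1) hxm).inter
          (measurableSet_lt (measurable_QL 1 0) hxm))
        measurable_const measurable_const
    · by_cases h2 : i.1 = 0 ∧ i.2 ≠ 0 ∧ i.2 ≠ 1
      · have heq : ∀ ω : (Fin (n+2) → Fin L → Bool) × (Fin (n+2) × Fin (n+2) → ℝ),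
            R ω.1 ω.2 i ↔ QL q (ω.1 0) (ω.1 i.2) < ω.2 i := by
          intro ω; rw [hR]; simp [hi, h2.1, h2.2.1, h2.2.2, fin_zero_ne_one]
        simp_rw [heq]
        exact Measurable.ite (measurableSet_lt (measurable_QL 0 i.2) hxm)
          measurable_const measurable_const
      · by_cases h3 : i.1 = 1 ∧ i.2 ≠ 0 ∧ i.2 ≠ 1
        · have heq : ∀ ω : (Fin (n+2) → Fin L → Bool) × (Fin (n+2) × Fin (n+2) → ℝ),
              R ω.1 ω.2 i ↔ QL q (ω.1 1) (ω.1 i.2) < ω.2 i := by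
            intro ω; rw [hR]; simp [hi, h3.1, h3.2.1, h3.2.2, hne10]
          simp_rw [heq]
          exact Measurable.ite (measurableSet_lt (measurable_QL 1 i.2) hxm)
            measurable_const measurable_const
        · have heq : ∀ ω : (Fin (n+2) → Fin L → Bool) × (Fin (n+2) × Fin (n+2) → ℝ),
              R ω.1 ω.2 i ↔ True := by
            intro ω; rw [hR]; simp [hi, h2, h3]
          simp_rw [heq]
          exact measurable_const
  have hb01 : ∀ (P : Prop) [Decidable P], (0:ℝ) ≤ (if P then (1:ℝ) else 0) ∧
      (if P then (1:ℝ) else 0) ≤ 1 := by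
    intro P _; by_cases h : P <;> simp [h]
  have hIndb : ∀ (u : Fin (n+2)) (a : Fin (n+2) → Fin L → Bool),
      0 ≤ (∏ ℓ : Fin L, if a u ℓ = false then (1:ℝ) else 0) ∧
      (∏ ℓ : Fin L, if a u ℓ = false then (1:ℝ) else 0) ≤ 1 := by
    intro u a
    exact ⟨Finset.prod_nonneg fun ℓ _ => (hb01 _).1,
      Finset.prod_le_one (fun ℓ _ => (hb01 _).1) (fun ℓ _ => (hb01 _).2)⟩
  have hF2b : ∀ a x, 0 ≤ F2 a x ∧ F2 a x ≤ 1 := by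
    intro a x
    exact ⟨Finset.prod_nonneg fun i _ => (hb01 _).1,
      Finset.prod_le_one (fun i _ => (hb01 _).1) (fun i _ => (hb01 _).2)⟩
  have hInt : Integrable (fun ω : (Fin (n+2) → Fin L → Bool) × (Fin (n+2) × Fin (n+2) → ℝ) =>
      (F0 ω.1 * F1 ω.1) * F2 ω.1 ω.2) (μA.prod μU) := by
    apply integrable_of_meas_bound (((hmInd 0).mul (hmInd 1)).mul hmF2)
    · intro ω
      exact mul_nonneg (mul_nonneg (hIndb 0 _).1 (hIndb 1 _).1) (hF2b _ _).1
    · intro ω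
      exact mul_le_one₀ (mul_le_one₀ (hIndb 0 _).2 (hIndb 1 _).1 (hIndb 1 _).2)
        (hF2b _ _).1 (hF2b _ _).2
  have hrw : ∫ ω, xiInd q 0 ω (0 : Fin (n+2)) * xiInd q 0 ω (1 : Fin (n+2))
        ∂(magMeasure (n+2) L μ1)
      = ∫ ω, (F0 ω.1 * F1 ω.1) * F2 ω.1 ω.2 ∂(μA.prod μU) := by
    rw [magMeasure]
    congr 1
    funext ω
    exact xi_pair_eq q ω
  rw [hrw, MeasureTheory.integral_prod _ hInt]
  -- the value of the inner integral, as a function of the attributes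
  set V : (Fin (n+2) → Fin L → Bool) → Fin (n+2) × Fin (n+2) → ℝ := fun a i =>
    if i = (0,1) then 1 - max (QL q (a 0) (a 1)) (QL q (a 1) (a 0))
    else if i.1 = 0 ∧ i.2 ≠ 0 ∧ i.2 ≠ 1 then 1 - QL q (a 0) (a i.2)
    else if i.1 = 1 ∧ i.2 ≠ 0 ∧ i.2 ≠ 1 then 1 - QL q (a 1) (a i.2)
    else 1 with hV
  have hinner : ∀ a : Fin (n+2) → Fin L → Bool,
      ∫ x, (F0 a * F1 a) * F2 a x ∂μU
        = (F0 a * F1 a) * ∏ i : Fin (n+2) × Fin (n+2), V a i := by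
    intro a
    rw [MeasureTheory.integral_const_mul]
    congr 1
    refine (integral_pi_prod unif01
      (fun (i : Fin (n+2) × Fin (n+2)) (t : ℝ) =>
        if ((i = (0,1) → QL q (a 0) (a 1) < t ∧ QL q (a 1) (a 0) < t) ∧
            (i.1 = 0 ∧ i.2 ≠ 0 ∧ i.2 ≠ 1 → QL q (a 0) (a i.2) < t) ∧
            (i.1 = 1 ∧ i.2 ≠ 0 ∧ i.2 ≠ 1 → QL q (a 1) (a i.2) < t))
          then (1:ℝ) else 0)).trans ?_
    apply Finset.prod_congr rfl
    intro i _
    rw [hV]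
    by_cases hi : i = (0,1)
    · have hiff : ∀ t : ℝ,
          ((i = (0,1) → QL q (a 0) (a 1) < t ∧ QL q (a 1) (a 0) < t) ∧
           (i.1 = 0 ∧ i.2 ≠ 0 ∧ i.2 ≠ 1 → QL q (a 0) (a i.2) < t) ∧
           (i.1 = 1 ∧ i.2 ≠ 0 ∧ i.2 ≠ 1 → QL q (a 1) (a i.2) < t))
          ↔ (max (QL q (a 0) (a 1)) (QL q (a 1) (a 0)) < t) := by
        intro t; rw [max_lt_iff]; simp [hi, fin_zero_ne_one]
      simp only [hiff, if_pos hi]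
      exact unif01_int_gt
        (le_trans (QL_nonneg hq _ _) (le_max_left _ _))
        (max_le (QL_le_one hq _ _) (QL_le_one hq _ _))
    · by_cases h2 : i.1 = 0 ∧ i.2 ≠ 0 ∧ i.2 ≠ 1
      · have hiff : ∀ t : ℝ,
            ((i = (0,1) → QL q (a 0) (a 1) < t ∧ QL q (a 1) (a 0) < t) ∧
             (i.1 = 0 ∧ i.2 ≠ 0 ∧ i.2 ≠ 1 → QL q (a 0) (a i.2) < t) ∧
             (i.1 = 1 ∧ i.2 ≠ 0 ∧ i.2 ≠ 1 → QL q (a 1) (a i.2) < t))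
            ↔ (QL q (a 0) (a i.2) < t) := by
          intro t; simp [hi, h2.1, h2.2.1, h2.2.2, fin_zero_ne_one]
        simp only [hiff, if_neg hi, if_pos h2]
        exact unif01_int_gt (QL_nonneg hq _ _) (QL_le_one hq _ _)
      · by_cases h3 : i.1 = 1 ∧ i.2 ≠ 0 ∧ i.2 ≠ 1
        · have hiff : ∀ t : ℝ,
              ((i = (0,1) → QL q (a 0) (a 1) < t ∧ QL q (a 1) (a 0) < t) ∧
               (i.1 = 0 ∧ i.2 ≠ 0 ∧ i.2 ≠ 1 → QL q (a 0) (a i.2) < t) ∧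
               (i.1 = 1 ∧ i.2 ≠ 0 ∧ i.2 ≠ 1 → QL q (a 1) (a i.2) < t))
              ↔ (QL q (a 1) (a i.2) < t) := by
            intro t; simp [hi, h3.1, h3.2.1, h3.2.2, hne10]
          simp only [hiff, if_neg hi, if_neg h2, if_pos h3]
          exact unif01_int_gt (QL_nonneg hq _ _) (QL_le_one hq _ _)
        · have hiff : ∀ t : ℝ,
              ((i = (0,1) → QL q (a 0) (a 1) < t ∧ QL q (a 1) (a 0) < t) ∧
               (i.1 = 0 ∧ i.2 ≠ 0 ∧ i.2 ≠ 1 → QL q (a 0) (a i.2) < t) ∧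
               (i.1 = 1 ∧ i.2 ≠ 0 ∧ i.2 ≠ 1 → QL q (a 1) (a i.2) < t))
              ↔ True := by
            intro t; simp [hi, h2, h3]
          simp only [hiff, if_neg hi, if_neg h2, if_neg h3, if_true]
          simp
  simp_rw [hinner]
  -- pointwise identification with a product over nodes
  set G2 : Fin (n+2) → (Fin L → Bool) → ℝ := fun u b =>
    if u = 0 ∨ u = 1 then (∏ ℓ : Fin L, if b ℓ = false then (1:ℝ) else 0)
    else (1 - QL q cff b)^2 with hG2
  have key : ∀ a : Fin (n+2) → Fin L → Bool,
      (F0 a * F1 a) * ∏ i : Fin (n+2) × Fin (n+2), V a i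
        = (1 - (q false false)^L) * ∏ u : Fin (n+2), G2 u (a u) := by
    intro a
    by_cases hA0 : ∀ ℓ, a 0 ℓ = false
    · by_cases hA1 : ∀ ℓ, a 1 ℓ = false
      · have ha0 : a 0 = cff := funext hA0
        have ha1 : a 1 = cff := funext hA1
        have hF0a : F0 a = 1 := by
          rw [hF0]; exact Finset.prod_eq_one fun ℓ _ => if_pos (hA0 ℓ)
        have hF1a : F1 a = 1 := by
          rw [hF1]; exact Finset.prod_eq_one fun ℓ _ => if_pos (hA1 ℓ)
        have hQcc : QL q cff cff = (q false false)^L := by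
          rw [QL, hcff]
          simp [Finset.prod_const]
        set P : ℝ := ∏ v : Fin (n+2),
          (if v = 0 ∨ v = 1 then 1 else (1 - QL q cff (a v))) with hP
        have hsplit : ∀ i : Fin (n+2) × Fin (n+2), V a i =
            (if i = (0,1) then (1 - (q false false)^L) else 1) *
            (if (i.1 = 0 ∨ i.1 = 1) ∧ i.2 ≠ 0 ∧ i.2 ≠ 1
              then (1 - QL q cff (a i.2)) else 1) := by
          intro i
          simp only [hV]
          by_cases hi : i = (0,1)
          · rw [if_pos hi, if_pos hi, ha0, ha1, max_self, hQcc]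
            have hnot : ¬((i.1 = 0 ∨ i.1 = 1) ∧ i.2 ≠ 0 ∧ i.2 ≠ 1) := by
              rw [hi]; simp
            rw [if_neg hnot, mul_one]
          · rw [if_neg hi, if_neg hi, one_mul]
            by_cases h2 : i.1 = 0 ∧ i.2 ≠ 0 ∧ i.2 ≠ 1
            · rw [if_pos h2, if_pos ⟨Or.inl h2.1, h2.2⟩, ha0]
            · by_cases h3 : i.1 = 1 ∧ i.2 ≠ 0 ∧ i.2 ≠ 1
              · rw [if_neg h2, if_pos h3, if_pos ⟨Or.inr h3.1, h3.2⟩, ha1]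
              · rw [if_neg h2, if_neg h3, if_neg]
                rintro ⟨h | h, hb⟩
                · exact h2 ⟨h, hb⟩
                · exact h3 ⟨h, hb⟩
        rw [hF0a, hF1a, one_mul, one_mul]
        rw [Finset.prod_congr rfl fun i _ => hsplit i, Finset.prod_mul_distrib]
        rw [Finset.prod_ite_eq' Finset.univ ((0,1) : Fin (n+2) × Fin (n+2))
          (fun _ => 1 - (q false false)^L), if_pos (Finset.mem_univ _)]
        congr 1
        have step1 : ∀ u : Fin (n+2),
            (∏ v : Fin (n+2), if ((u = 0 ∨ u = 1) ∧ v ≠ 0 ∧ v ≠ 1)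
              then (1 - QL q cff (a v)) else 1)
            = if u = 0 ∨ u = 1 then P else 1 := by
          intro u
          by_cases hu : u = 0 ∨ u = 1
          · rw [if_pos hu, hP]
            apply Finset.prod_congr rfl
            intro v _
            by_cases hv : v = 0 ∨ v = 1
            · rw [if_pos hv, if_neg]
              rintro ⟨-, hv0, hv1⟩
              rcases hv with h | h
              · exact hv0 h
              · exact hv1 h
            · push_neg at hv
              rw [if_pos ⟨hu, hv.1, hv.2⟩, if_neg (by tauto)]
          · rw [if_neg hu]
            apply Finset.prod_eq_one
            intro v _
            rw [if_neg (by tauto)]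
        calc (∏ i : Fin (n+2) × Fin (n+2),
              if ((i.1 = 0 ∨ i.1 = 1) ∧ i.2 ≠ 0 ∧ i.2 ≠ 1)
                then (1 - QL q cff (a i.2)) else 1)
            = ∏ u : Fin (n+2), ∏ v : Fin (n+2),
                (if ((u = 0 ∨ u = 1) ∧ v ≠ 0 ∧ v ≠ 1)
                  then (1 - QL q cff (a v)) else 1) := Fintype.prod_prod_type _
          _ = ∏ u : Fin (n+2), (if u = 0 ∨ u = 1 then P else 1) :=
              Finset.prod_congr rfl fun u _ => step1 u
          _ = P * P := by
              rw [← Finset.mul_prod_erase Finset.univ _ (Finset.mem_univ (0 : Fin (n+2))),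
                if_pos (Or.inl rfl),
                ← Finset.mul_prod_erase _ _
                  (Finset.mem_erase.2 ⟨hne10, Finset.mem_univ (1 : Fin (n+2))⟩),
                if_pos (Or.inr rfl)]
              rw [Finset.prod_eq_one, mul_one]
              intro u hu
              have hu1 := (Finset.mem_erase.1 hu).1
              have hu0 := (Finset.mem_erase.1 (Finset.mem_erase.1 hu).2).1
              rw [if_neg]
              rintro (h | h)
              · exact hu0 h
              · exact hu1 h
          _ = ∏ u : Fin (n+2), G2 u (a u) := by
              rw [hP, ← Finset.prod_mul_distrib]
              apply Finset.prod_congr rfl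
              intro v _
              simp only [hG2]
              by_cases hv : v = 0 ∨ v = 1
              · rw [if_pos hv, if_pos hv, mul_one, eq_comm]
                rcases hv with h | h
                · subst h; exact Finset.prod_eq_one fun ℓ _ => if_pos (hA0 ℓ)
                · subst h; exact Finset.prod_eq_one fun ℓ _ => if_pos (hA1 ℓ)
              · rw [if_neg hv, if_neg hv, sq]
      · obtain ⟨ℓ0, hℓ0⟩ := not_forall.1 hA1
        have hF1a : F1 a = 0 := by
          rw [hF1]; exact Finset.prod_eq_zero (Finset.mem_univ ℓ0) (if_neg hℓ0)
        have hG21 : G2 1 (a 1) = 0 := by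
          rw [hG2]
          simp only [if_pos (Or.inr rfl)]
          exact Finset.prod_eq_zero (Finset.mem_univ ℓ0) (if_neg hℓ0)
        rw [hF1a, mul_zero, zero_mul,
          Finset.prod_eq_zero (Finset.mem_univ (1 : Fin (n+2))) hG21, mul_zero]
    · obtain ⟨ℓ0, hℓ0⟩ := not_forall.1 hA0
      have hF0a : F0 a = 0 := by
        rw [hF0]; exact Finset.prod_eq_zero (Finset.mem_univ ℓ0) (if_neg hℓ0)
      have hG20 : G2 0 (a 0) = 0 := by
        rw [hG2]
        simp only [if_pos (Or.inl rfl)]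
        exact Finset.prod_eq_zero (Finset.mem_univ ℓ0) (if_neg hℓ0)
      rw [hF0a, zero_mul, zero_mul,
        Finset.prod_eq_zero (Finset.mem_univ (0 : Fin (n+2))) hG20, mul_zero]
  simp_rw [key]
  rw [MeasureTheory.integral_const_mul]
  rw [(integral_pi_prod μB G2 : _)]
  have hGval : ∀ u : Fin (n+2), ∫ b, G2 u b ∂μB
      = if u = 0 ∨ u = 1 then (1-μ1)^L
        else (1 - 2*(Gam μ1 q false)^L
          + ((1-μ1)*(q false false)^2 + μ1*(q false true)^2)^L) := by
    intro u
    by_cases hu : u = 0 ∨ u = 1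
    · rw [if_pos hu]
      have hGu : G2 u = fun b => ∏ ℓ : Fin L, (if b ℓ = false then (1:ℝ) else 0) := by
        funext b; rw [hG2]; simp only [if_pos hu]
      rw [hGu, hμB]
      exact integral_indFalse μ1 h0 h1 L
    · rw [if_neg hu]
      have hGu : ∀ b, G2 u b = 1 - 2 * QL q cff b + (QL q cff b)^2 := by
        intro b; rw [hG2]; simp only [if_neg hu]; ring
      simp only [hGu]
      have hX1 : ∫ b, QL q cff b ∂μB = (Gam μ1 q false)^L := by
        have h := integral_QL_pow μ1 h0 h1 q L 1
        simp only [pow_one] at h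
        rw [hcff, hμB, h, Gam]
      have hX2 : ∫ b, (QL q cff b)^2 ∂μB
          = ((1-μ1)*(q false false)^2 + μ1*(q false true)^2)^L := by
        rw [hcff, hμB]
        exact integral_QL_pow μ1 h0 h1 q L 2
      rw [MeasureTheory.integral_add Integrable.of_finite Integrable.of_finite,
        MeasureTheory.integral_sub Integrable.of_finite Integrable.of_finite,
        MeasureTheory.integral_const_mul, MeasureTheory.integral_const]
      simp only [measureReal_def, measure_univ, ENNReal.toReal_one, smul_eq_mul, one_mul]
      rw [hX1, hX2]
  rw [Finset.prod_congr rfl fun u _ => hGval u]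
  rw [← Finset.mul_prod_erase Finset.univ _ (Finset.mem_univ (0 : Fin (n+2))),
    if_pos (Or.inl rfl),
    ← Finset.mul_prod_erase _ _
      (Finset.mem_erase.2 ⟨hne10, Finset.mem_univ (1 : Fin (n+2))⟩),
    if_pos (Or.inr rfl)]
  have hrest : (∏ u ∈ (Finset.univ.erase (0 : Fin (n+2))).erase 1,
      (if u = 0 ∨ u = 1 then (1-μ1)^L
        else (1 - 2*(Gam μ1 q false)^L
          + ((1-μ1)*(q false false)^2 + μ1*(q false true)^2)^L)))
      = (1 - 2*(Gam μ1 q false)^L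
          + ((1-μ1)*(q false false)^2 + μ1*(q false true)^2)^L)^n := by
    rw [Finset.prod_congr rfl (fun u hu => ?_), Finset.prod_const]
    · congr 1
      rw [Finset.card_erase_of_mem (Finset.mem_erase.2 ⟨hne10, Finset.mem_univ _⟩),
        Finset.card_erase_of_mem (Finset.mem_univ _), Finset.card_univ, Fintype.card_fin]
      omega
    · have hu1 := (Finset.mem_erase.1 hu).1
      have hu0 := (Finset.mem_erase.1 (Finset.mem_erase.1 hu).2).1
      rw [if_neg]
      rintro (h | h)
      · exact hu0 h
      · exact hu1 h
  rw [hrest]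
  ring

lemma tendsto_mul_pow_L_zero {ρ : ℝ} (hρ : 0 < ρ) {L : ℕ → ℕ} (hL : Admissible ρ L)
    {c : ℝ} (hc0 : 0 < c) (hc : 1 + ρ * Real.log c < 0) :
    Tendsto (fun m : ℕ => (m:ℝ) * c ^ (L m)) atTop (nhds 0) := by
  have hlogc : Real.log c < 0 := by nlinarith
  have hgt : ∀ᶠ m : ℕ in atTop, (1:ℝ) < (m:ℝ) := by
    filter_upwards [eventually_ge_atTop 2] with m hm
    exact_mod_cast Nat.lt_of_lt_of_le Nat.one_lt_two hm
  have hne : ∀ᶠ m : ℕ in atTop, (fun n : ℕ => ρ * Real.log n) m ≠ 0 := by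
    filter_upwards [hgt] with m hm
    exact mul_ne_zero hρ.ne' (Real.log_pos hm).ne'
  have hdiv1 : Tendsto (fun m : ℕ => (L m : ℝ) / (ρ * Real.log m)) atTop (nhds 1) :=
    (Asymptotics.isEquivalent_iff_tendsto_one hne).1 hL
  have hdiv : Tendsto (fun m : ℕ => (L m : ℝ) / Real.log m) atTop (nhds ρ) := by
    have h2 := hdiv1.const_mul ρ
    rw [mul_one] at h2
    apply h2.congr'
    filter_upwards [hgt] with m hm
    have hlg : Real.log m ≠ 0 := (Real.log_pos hm).ne'
    field_simp
  have hfac : Tendsto (fun m : ℕ => 1 + (L m : ℝ)/Real.log m * Real.log c) atTop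
      (nhds (1 + ρ * Real.log c)) := tendsto_const_nhds.add (hdiv.mul_const _)
  have hexp : Tendsto (fun m : ℕ => Real.log m * (1 + (L m : ℝ)/Real.log m * Real.log c))
      atTop atBot :=
    Filter.Tendsto.atTop_mul_neg hc
      (Real.tendsto_log_atTop.comp tendsto_natCast_atTop_atTop) hfac
  have h0' : Tendsto (fun m : ℕ =>
      Real.exp (Real.log m * (1 + (L m : ℝ)/Real.log m * Real.log c))) atTop (nhds 0) :=
    Real.tendsto_exp_atBot.comp hexp
  apply h0'.congr'
  filter_upwards [hgt] with m hm
  have hm0 : (0:ℝ) < (m:ℝ) := lt_trans one_pos hm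
  have hlg : Real.log m ≠ 0 := (Real.log_pos hm).ne'
  have harg : Real.log m * (1 + (L m : ℝ)/Real.log m * Real.log c)
      = Real.log m + (L m : ℝ) * Real.log c := by
    field_simp
  rw [harg, Real.exp_add, Real.exp_log hm0, Real.exp_nat_mul, Real.exp_log hc0]

lemma tendsto_pow_L_zero {ρ : ℝ} (hρ : 0 < ρ) {L : ℕ → ℕ} (hL : Admissible ρ L)
    {c : ℝ} (hc0 : 0 < c) (hc : 1 + ρ * Real.log c < 0) :
    Tendsto (fun m : ℕ => c ^ (L m)) atTop (nhds 0) := by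
  refine tendsto_of_tendsto_of_tendsto_of_le_of_le' tendsto_const_nhds
    (tendsto_mul_pow_L_zero hρ hL hc0 hc) ?_ ?_
  · exact Eventually.of_forall fun m => pow_nonneg hc0.le _
  · filter_upwards [eventually_ge_atTop 1] with m hm
    exact le_mul_of_one_le_left (pow_nonneg hc0.le _) (by exact_mod_cast hm)

lemma xiInd_nonneg {n L : ℕ} (q : Bool → Bool → ℝ) (k : ℕ)
    (ω : (Fin n → Fin L → Bool) × (Fin n × Fin n → ℝ)) (u : Fin n) :
    0 ≤ xiInd q k ω u := by
  rw [xiInd]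
  split <;> norm_num

theorem mag_second_moment_ratio_ell_zero
    (μ1 : ℝ) (hμ1 : 0 < μ1) (hμ1' : μ1 < 1)
    (q : Bool → Bool → ℝ) (hq : ∀ a b, 0 < q a b ∧ q a b < 1)
    (hqsym : q false true = q true false)
    (ρ : ℝ) (hρ : 0 < ρ)
    (hΓ0 : 1 + ρ * Real.log (Gam μ1 q false) < 0)
    (L : ℕ → ℕ) (hL : Admissible ρ L) :
    Filter.limsup
      (fun n =>
        (∫ ω, xiInd q 0 ω (0 : Fin (n + 2)) * xiInd q 0 ω (1 : Fin (n + 2))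
            ∂(magMeasure (n + 2) (L (n + 2)) μ1)) /
          (∫ ω, xiInd q 0 ω (0 : Fin (n + 2)) ∂(magMeasure (n + 2) (L (n + 2)) μ1)) ^ 2)
      atTop ≤ 1 := by
  obtain ⟨hq000, hq001⟩ := hq false false
  obtain ⟨hq010, hq011⟩ := hq false true
  have hμ0 : 0 < 1 - μ1 := by linarith
  set Γ : ℝ := Gam μ1 q false with hΓdef
  set Γ2 : ℝ := (1-μ1)*(q false false)^2 + μ1*(q false true)^2 with hΓ2def
  have hΓpos : 0 < Γ := by
    rw [hΓdef, Gam]; positivity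
  have hΓ2pos : 0 < Γ2 := by rw [hΓ2def]; positivity
  have hΓ2le : Γ2 ≤ Γ := by
    rw [hΓ2def, hΓdef, Gam]
    nlinarith [mul_nonneg hμ0.le (mul_nonneg hq000.le (sub_nonneg.2 hq001.le)),
      mul_nonneg hμ1.le (mul_nonneg hq010.le (sub_nonneg.2 hq011.le))]
  have hΓsq : Γ^2 ≤ Γ2 := by
    rw [hΓ2def, hΓdef, Gam]
    nlinarith [mul_nonneg (mul_nonneg hμ1.le hμ0.le) (sq_nonneg (q false false - q false true))]
  have hcond2 : 1 + ρ * Real.log Γ2 < 0 := by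
    have hle : Real.log Γ2 ≤ Real.log Γ := Real.log_le_log hΓ2pos hΓ2le
    nlinarith
  set γ : ℕ → ℝ := fun n => Γ ^ (L (n+2)) with hγdef
  set δ : ℕ → ℝ := fun n => Γ2 ^ (L (n+2)) with hδdef
  have hγ0 : Tendsto γ atTop (nhds 0) :=
    (tendsto_add_atTop_iff_nat 2).2 (tendsto_pow_L_zero hρ hL hΓpos hΓ0)
  have hδ0 : Tendsto (fun n : ℕ => (n:ℝ) * δ n) atTop (nhds 0) := by
    have h2 : Tendsto (fun n : ℕ => ((n+2 : ℕ):ℝ) * Γ2 ^ (L (n+2))) atTop (nhds 0) :=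
      (tendsto_add_atTop_iff_nat 2).2 (tendsto_mul_pow_L_zero hρ hL hΓ2pos hcond2)
    refine tendsto_of_tendsto_of_tendsto_of_le_of_le' tendsto_const_nhds h2 ?_ ?_
    · exact Eventually.of_forall fun n =>
        mul_nonneg (Nat.cast_nonneg n) (pow_nonneg hΓ2pos.le _)
    · refine Eventually.of_forall fun n => ?_
      have hcast : ((n:ℝ)) ≤ ((n+2 : ℕ):ℝ) := by exact_mod_cast Nat.le_add_right n 2
      exact mul_le_mul_of_nonneg_right hcast (pow_nonneg hΓ2pos.le _)
  set B : ℕ → ℝ := fun n : ℕ => Real.exp ((n:ℝ) * δ n / (1 - γ n)^2) / (1 - γ n)^2 with hBdef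
  have hden : Tendsto (fun n : ℕ => (1 - γ n)^2) atTop (nhds 1) := by
    have h1 : Tendsto (fun n : ℕ => 1 - γ n) atTop (nhds (1 - 0)) :=
      Tendsto.sub tendsto_const_nhds hγ0
    norm_num at h1
    simpa using h1.pow 2
  have hB1 : Tendsto B atTop (nhds 1) := by
    have harg : Tendsto (fun n : ℕ => (n:ℝ) * δ n / (1 - γ n)^2) atTop (nhds 0) := by
      have h := hδ0.div hden one_ne_zero
      rw [zero_div] at h
      exact h
    have hnum : Tendsto (fun n : ℕ => Real.exp ((n:ℝ) * δ n / (1 - γ n)^2)) atTop (nhds 1) := by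
      have h := (Real.continuous_exp.tendsto 0).comp harg
      rw [Real.exp_zero] at h
      exact h
    rw [hBdef]
    have h := hnum.div hden one_ne_zero
    rw [div_one] at h
    exact h
  have hbound : ∀ᶠ n : ℕ in atTop,
      (∫ ω, xiInd q 0 ω (0 : Fin (n + 2)) * xiInd q 0 ω (1 : Fin (n + 2))
          ∂(magMeasure (n + 2) (L (n + 2)) μ1)) /
        (∫ ω, xiInd q 0 ω (0 : Fin (n + 2)) ∂(magMeasure (n + 2) (L (n + 2)) μ1)) ^ 2
      ≤ B n := by
    have hsmall : ∀ᶠ n : ℕ in atTop, γ n < 1/2 :=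
      hγ0.eventually_lt_const (by norm_num : (0:ℝ) < 1/2)
    filter_upwards [hsmall] with n hn
    rw [integral_xi_zero μ1 hμ1 hμ1' q hq n (L (n+2)),
      integral_xi_pair μ1 hμ1 hμ1' q hq n (L (n+2)), ← hΓdef, ← hΓ2def]
    have hγn : Γ ^ (L (n+2)) = γ n := rfl
    have hδn : Γ2 ^ (L (n+2)) = δ n := rfl
    rw [hγn, hδn]
    set Apow : ℝ := (1-μ1) ^ (L (n+2)) with hApow
    set cq : ℝ := (q false false) ^ (L (n+2)) with hcq
    set T : ℝ := 1 - 2 * γ n + δ n with hT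
    have hApos : 0 < Apow := pow_pos hμ0 _
    have hγpos : 0 < γ n := pow_pos hΓpos _
    have h1γ : 0 < 1 - γ n := by linarith
    have hδγ : (γ n)^2 ≤ δ n := by
      have h := pow_le_pow_left₀ (sq_nonneg Γ) hΓsq (L (n+2))
      calc (γ n)^2 = (Γ^2)^(L (n+2)) := by
            rw [hγdef, ← pow_mul, ← pow_mul, Nat.mul_comm]
        _ ≤ δ n := h
    have hδpos : 0 < δ n := pow_pos hΓ2pos _
    have hcq0 : 0 ≤ cq := pow_nonneg hq000.le _
    have hcq1 : cq ≤ 1 := pow_le_one₀ hq000.le hq001.le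
    have hT2 : (1 - γ n)^2 ≤ T := by rw [hT]; nlinarith
    have hT0 : 0 ≤ T := le_trans (sq_nonneg _) hT2
    set E : ℝ := Real.exp (δ n / (1 - γ n)^2) with hE
    have hTle : T ≤ (1 - γ n)^2 * E := by
      have h1 : T ≤ (1 - γ n)^2 + δ n := by rw [hT]; nlinarith [sq_nonneg (γ n)]
      have h2 : (1 - γ n)^2 + δ n = (1 - γ n)^2 * (1 + δ n / (1 - γ n)^2) := by
        field_simp
      have h3 : 1 + δ n / (1 - γ n)^2 ≤ E := by
        rw [hE, add_comm]
        exact Real.add_one_le_exp _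
      calc T ≤ (1 - γ n)^2 * (1 + δ n / (1 - γ n)^2) := by rw [← h2]; exact h1
        _ ≤ (1 - γ n)^2 * E := by
            exact mul_le_mul_of_nonneg_left h3 (sq_nonneg _)
    have hDpos : (0:ℝ) < ((1 - γ n)^(n+1))^2 := by positivity
    calc Apow^2 * (1 - cq) * T^n / (Apow * (1 - γ n)^(n+1))^2
        = (Apow^2 * ((1 - cq) * T^n)) / (Apow^2 * ((1 - γ n)^(n+1))^2) := by
          rw [mul_pow]; ring_nf
      _ = ((1 - cq) * T^n) / ((1 - γ n)^(n+1))^2 := by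
          rw [mul_div_mul_left _ _ (by positivity : (Apow:ℝ)^2 ≠ 0)]
      _ ≤ T^n / ((1 - γ n)^(n+1))^2 := by
          apply (div_le_div_iff_of_pos_right hDpos).2
          exact mul_le_of_le_one_left (pow_nonneg hT0 n) (by linarith)
      _ ≤ ((1 - γ n)^2 * E)^n / ((1 - γ n)^(n+1))^2 :=
          (div_le_div_iff_of_pos_right hDpos).2 (pow_le_pow_left₀ hT0 hTle n)
      _ = E^n / (1 - γ n)^2 := by
          rw [div_eq_div_iff (ne_of_gt hDpos) (by positivity : ((1:ℝ) - γ n)^2 ≠ 0)]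
          rw [mul_pow, ← pow_mul, ← pow_mul]
          ring
      _ = B n := by
          rw [hE, ← Real.exp_nat_mul]
          simp only [hBdef]
          rw [mul_div_assoc]
  have hR0 : ∀ n : ℕ,
      0 ≤ (∫ ω, xiInd q 0 ω (0 : Fin (n + 2)) * xiInd q 0 ω (1 : Fin (n + 2))
          ∂(magMeasure (n + 2) (L (n + 2)) μ1)) /
        (∫ ω, xiInd q 0 ω (0 : Fin (n + 2)) ∂(magMeasure (n + 2) (L (n + 2)) μ1)) ^ 2 := by
    intro n
    apply div_nonneg _ (sq_nonneg _)
    exact integral_nonneg fun ω => mul_nonneg (xiInd_nonneg q 0 ω _) (xiInd_nonneg q 0 ω _)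
  refine le_of_le_of_eq (Filter.limsup_le_limsup hbound ?_ ?_) hB1.limsup_eq
  · exact IsBoundedUnder.isCoboundedUnder_le (Filter.isBoundedUnder_of ⟨0, fun n => hR0 n⟩)
  · exact hB1.isBoundedUnder_le
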